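/- arXiv:2307.06112 — 5 statements merged into one kernel-verified Lean document; each statement's English description precedes it below -/
import Mathlib

section
/- Let G be a group, F a field, and K a nonzero homogeneous left ideal of the free G-graded associative algebra F⟨X|G⟩. Then K does not satisfy any nonzero G-graded polynomial identity; i.e., for every nonzero multilinear graded polynomial f(x₁^{(g₁)},…,x_n^{(g_n)}) there are homogeneous elements of K of degrees g₁,…,g_n on which f does not vanish. -/
/-- The free `G`-graded associative algebra on countably many variables of each degree,
modelled as the monoid algebra of the free monoid on the variables `(i, g)` (of degree `g`);
a monomial (word) has degree the product of the degrees of its letters. -/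
abbrev FreeGradedAlg (F G : Type) [Field F] [Group G] : Type :=
  MonoidAlgebra F (FreeMonoid (ℕ × G))

/-- The degree of a word: the product of the degrees of its letters. -/
def wordDeg {G : Type} [Group G] : FreeMonoid (ℕ × G) →* G :=
  FreeMonoid.lift (fun p : ℕ × G => p.2)

/-- The homogeneous component of degree `g` of the free graded algebra: the span of the
words of degree `g`. -/
noncomputable def freeComponent (F : Type) {G : Type} [Field F] [Group G] (g : G) :
    Submodule F (FreeGradedAlg F G) :=
  MonoidAlgebra.supported F F {w : FreeMonoid (ℕ × G) | wordDeg w = g}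

/-- a nonzero homogeneous left ideal `K` of the free `G`-graded associative
algebra satisfies no nonzero graded polynomial identity: for every nonzero graded polynomial
`f` (in particular every nonzero multilinear one, modelled in `FreeAlgebra F (ℕ × G)` with
the variable `(i,g)` of degree `g`) there is a graded substitution by homogeneous elements of
`K` of the matching degrees on which `f` does not vanish. -/
theorem stmt3 {F : Type} [Field F] {G : Type} [Group G]
    (K : Submodule F (FreeGradedAlg F G))
    (hKleft : ∀ a : FreeGradedAlg F G, ∀ x ∈ K, a * x ∈ K)
    (hKhom : K = ⨆ g : G, K ⊓ freeComponent F g)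
    (hKne : K ≠ ⊥)
    (f : FreeAlgebra F (ℕ × G)) (hf : f ≠ 0) :
    ¬ (∀ v : ℕ × G → FreeGradedAlg F G,
        (∀ p : ℕ × G, v p ∈ K) → (∀ p : ℕ × G, v p ∈ freeComponent F p.2) →
        FreeAlgebra.lift F v f = 0) := by
  classical
  intro hid
  -- obtain a nonzero homogeneous element w of K, of degree g
  obtain ⟨g, hg⟩ : ∃ g, K ⊓ freeComponent F g ≠ ⊥ := by
    by_contra h
    push_neg at h
    exact hKne (hKhom.trans (by simp [h]))
  obtain ⟨w, hw, hw0⟩ := Submodule.exists_mem_ne_zero_of_ne_bot hg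
  have hwK : w ∈ K := hw.1
  have hwg : ∀ t ∈ w.coeff.support, wordDeg t = g :=
    fun t ht => MonoidAlgebra.mem_supported.mp hw.2 ht
  -- a bound on the first components of letters occurring in w
  set N : ℕ := w.coeff.support.sup fun t => ((t.toList.map fun a => a.1 + 1).sum) with hN
  have hbound : ∀ t ∈ w.coeff.support, ∀ a ∈ FreeMonoid.toList t, a.1 < N := by
    intro t ht a ha
    have h1 : a.1 + 1 ≤ (t.toList.map fun a => a.1 + 1).sum :=
      List.single_le_sum (by simp) _ (List.mem_map_of_mem ha)
    have h2 : ((t.toList.map fun a => a.1 + 1).sum) ≤ N :=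
      Finset.le_sup (f := fun t : FreeMonoid (ℕ × G) => ((t.toList.map fun a => a.1 + 1).sum)) ht
    omega
  -- the substitution
  set ℓ : ℕ × G → ℕ × G := fun p => (p.1 + N, p.2 * g⁻¹) with hℓ
  set v : ℕ × G → FreeGradedAlg F G :=
    fun p => MonoidAlgebra.single (FreeMonoid.of (ℓ p)) 1 * w with hv
  have hvK : ∀ p, v p ∈ K := fun p => hKleft _ w hwK
  have hvcomp : ∀ p : ℕ × G, v p ∈ freeComponent F p.2 := by
    intro p
    rw [freeComponent, MonoidAlgebra.mem_supported]
    intro t ht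
    have := MonoidAlgebra.support_coeff_single_mul_subset w (1 : F) (FreeMonoid.of (ℓ p)) ht
    obtain ⟨u, hu, rfl⟩ := Finset.mem_image.mp this
    show wordDeg _ = p.2
    rw [map_mul, hwg u hu]
    simp [wordDeg, hℓ]
  -- the decoding monoid homomorphism
  set D : FreeMonoid (ℕ × G) →* FreeMonoid (ℕ × G) :=
    FreeMonoid.lift (fun a : ℕ × G =>
      if N ≤ a.1 then FreeMonoid.of (a.1 - N, a.2 * g) else 1) with hD
  have hDℓ : ∀ p : ℕ × G, D (FreeMonoid.of (ℓ p)) = FreeMonoid.of p := by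
    intro p
    rw [hD, FreeMonoid.lift_eval_of]
    simp [hℓ]
  have hDw : ∀ u ∈ w.coeff.support, D u = 1 := by
    intro u hu
    have : ∀ a ∈ FreeMonoid.toList u, a.1 < N := hbound u hu
    clear hu
    induction u using FreeMonoid.inductionOn' with
    | one => simp
    | of_mul a u ih =>
      rw [map_mul]
      have ha : a.1 < N := this a (by simp [FreeMonoid.toList_mul, FreeMonoid.toList_of])
      have h1 : D (FreeMonoid.of a) = 1 := by
        rw [hD, FreeMonoid.lift_eval_of, if_neg (by omega)]
      rw [h1, one_mul]
      exact ih (fun b hb => this b (by simp [FreeMonoid.toList_mul, FreeMonoid.toList_of, hb]))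
  -- the monomial substitution
  set W : FreeMonoid (ℕ × G) → FreeGradedAlg F G := fun m => FreeMonoid.lift v m with hW
  have hWsupp : ∀ m : FreeMonoid (ℕ × G), ∀ t ∈ (W m).coeff.support, D t = m := by
    intro m
    induction m using FreeMonoid.inductionOn' with
    | one =>
      intro t ht
      have : W 1 = MonoidAlgebra.single 1 1 := by
        simp only [hW, map_one]; rfl
      rw [this, MonoidAlgebra.coeff_single] at ht
      have := Finsupp.support_single_subset ht
      simp only [Finset.mem_singleton] at this
      rw [this, map_one]
    | of_mul p m ih =>
      intro t ht
      have hWm : W (FreeMonoid.of p * m) = v p * W m := by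
        simp only [hW, map_mul, FreeMonoid.lift_eval_of]
      rw [hWm] at ht
      have h1 := MonoidAlgebra.support_coeff_mul_subset (v p) (W m) ht
      rw [Finset.mem_mul] at h1
      obtain ⟨s, hs, t', ht', rfl⟩ := h1
      have hs2 := MonoidAlgebra.support_coeff_single_mul_subset w (1 : F) (FreeMonoid.of (ℓ p)) hs
      obtain ⟨u, hu, rfl⟩ := Finset.mem_image.mp hs2
      rw [map_mul, map_mul, hDℓ, hDw u hu, mul_one, ih t' ht']
  have hWne : ∀ m : FreeMonoid (ℕ × G), W m ≠ 0 := by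
    intro m
    induction m using FreeMonoid.inductionOn' with
    | one => simp only [hW, map_one]; exact one_ne_zero
    | of_mul p m ih =>
      have hWm : W (FreeMonoid.of p * m) = v p * W m := by
        simp only [hW, map_mul, FreeMonoid.lift_eval_of]
      have hsing : (MonoidAlgebra.single (FreeMonoid.of (ℓ p)) (1 : F)
          : FreeGradedAlg F G) ≠ 0 := by
        simp
      rw [hWm]
      exact mul_ne_zero (mul_ne_zero hsing hw0) ih
  -- relate FreeAlgebra.lift to MonoidAlgebra.lift
  set Φ : FreeGradedAlg F G →ₐ[F] FreeGradedAlg F G :=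
    MonoidAlgebra.lift F (FreeGradedAlg F G) (FreeMonoid (ℕ × G)) (FreeMonoid.lift v) with hΦ
  set e := FreeAlgebra.equivMonoidAlgebraFreeMonoid (R := F) (X := ℕ × G) with he
  have hcomm : (FreeAlgebra.lift F v : FreeAlgebra F (ℕ × G) →ₐ[F] FreeGradedAlg F G)
      = Φ.comp e.toAlgHom := by
    apply FreeAlgebra.hom_ext
    funext p
    simp only [Function.comp_apply, AlgHom.coe_comp, AlgEquiv.toAlgHom_eq_coe,
      AlgHom.coe_coe, FreeAlgebra.lift_ι_apply]
    have he2 : e (FreeAlgebra.ι F p) = MonoidAlgebra.of F (FreeMonoid (ℕ × G)) (FreeMonoid.of p) := by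
      rw [he, FreeAlgebra.equivMonoidAlgebraFreeMonoid]
      simp [FreeAlgebra.lift_ι_apply]
    change v p = Φ (e (FreeAlgebra.ι F p))
    rw [he2, hΦ, MonoidAlgebra.lift_of, FreeMonoid.lift_eval_of]
  have hq0 : e f ≠ 0 := fun h => hf (by simpa using congrArg e.symm h)
  have hΦ0 : Φ (e f) = 0 := by
    have := hid v hvK hvcomp
    rw [hcomm] at this
    exact this
  -- contradiction
  obtain ⟨m, hm⟩ := Finsupp.support_nonempty_iff.mpr (mt MonoidAlgebra.coeff_eq_zero.mp hq0)
  obtain ⟨t, ht⟩ := Finsupp.support_nonempty_iff.mpr (mt MonoidAlgebra.coeff_eq_zero.mp (hWne m))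
  have hval : Φ (e f) = (e f).coeff.sum fun a b => b • W a := by
    rw [hΦ, MonoidAlgebra.lift_apply]
  have hcoeff : (Φ (e f)).coeff t = (e f).coeff m * (W m).coeff t := by
    rw [hval, Finsupp.sum, MonoidAlgebra.coeff_sum, Finsupp.finset_sum_apply]
    rw [Finset.sum_eq_single m]
    · rw [MonoidAlgebra.coeff_smul, Finsupp.smul_apply, smul_eq_mul]
    · intro a ha hne
      rw [MonoidAlgebra.coeff_smul, Finsupp.smul_apply, smul_eq_mul]
      have : t ∉ (W a).coeff.support := by
        intro hta
        exact hne ((hWsupp a t hta).symm.trans (hWsupp m t ht))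
      rw [Finsupp.notMem_support_iff.mp this, mul_zero]
    · intro h; exact absurd hm h
  rw [hΦ0] at hcoeff
  exact (mul_ne_zero (Finsupp.mem_support_iff.mp hm) (Finsupp.mem_support_iff.mp ht))
    hcoeff.symm
end

section
/- Let G be a group and A a G-graded F-algebra with A = B + C, where B is a nonzero homogeneous (two-sided) ideal of A and C is a homogeneous subalgebra of A. If both B and C satisfy graded polynomial identities, then A satisfies a graded polynomial identity. -/
section

variable (F : Type) [Field F] (G : Type) [Group G]
variable {A : Type} [Ring A] [Algebra F A]

/-- `𝒜` is a `G`-grading of the `F`-algebra `A`. -/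
def IsGrading (𝒜 : G → Submodule F A) : Prop :=
  (∀ g h : G, ∀ x ∈ 𝒜 g, ∀ y ∈ 𝒜 h, x * y ∈ 𝒜 (g * h)) ∧
    (⨆ g, 𝒜 g) = ⊤ ∧ iSupIndep 𝒜

/-- The subset `S` of the `G`-graded algebra `(A, 𝒜)` satisfies a nonzero graded polynomial
identity (identities modelled in `FreeAlgebra F (ℕ × G)`, variable `(i,g)` of degree `g`,
substitutions by homogeneous elements of `S` of matching degrees). -/
def GrPIOn (𝒜 : G → Submodule F A) (S : Submodule F A) : Prop :=
  ∃ f : FreeAlgebra F (ℕ × G), f ≠ 0 ∧ ∀ v : ℕ × G → A,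
    (∀ p : ℕ × G, v p ∈ S) → (∀ p : ℕ × G, v p ∈ 𝒜 p.2) →
      FreeAlgebra.lift F v f = 0

end

open FreeMonoid MonoidAlgebra

set_option linter.unusedSectionVars false
set_option maxHeartbeats 1000000

noncomputable section PI5Aux

variable {F : Type} [Field F] {G : Type} [Group G]

/-- Product of the values of `v` along the word `w`. -/
def prodW {T : Type*} [Monoid T] (v : ℕ × G → T) (w : FreeMonoid (ℕ × G)) : T :=
  ((FreeMonoid.toList w).map v).prod

/-- Degree of a word. -/
def degw {G : Type} [Group G] (w : FreeMonoid (ℕ × G)) : G :=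
  ((FreeMonoid.toList w).map Prod.snd).prod

/-- The canonical equivalence with the monoid algebra of the free monoid. -/
def eFA (F : Type) [Field F] (G : Type) [Group G] :
    FreeAlgebra F (ℕ × G) ≃ₐ[F] MonoidAlgebra F (FreeMonoid (ℕ × G)) :=
  FreeAlgebra.equivMonoidAlgebraFreeMonoid

theorem eFA_iota (x : ℕ × G) :
    eFA F G (FreeAlgebra.ι F x) = MonoidAlgebra.single (FreeMonoid.of x) 1 := by
  simp [eFA, FreeAlgebra.equivMonoidAlgebraFreeMonoid, MonoidAlgebra.of_apply]

theorem lift_eq_sum {T : Type} [Ring T] [Algebra F T] (v : ℕ × G → T)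
    (f : FreeAlgebra F (ℕ × G)) :
    FreeAlgebra.lift F v f = (eFA F G f).coeff.sum fun w r => r • prodW v w := by
  have h1 : (FreeAlgebra.lift F v) =
      ((MonoidAlgebra.lift F T (FreeMonoid (ℕ × G)) (FreeMonoid.lift v)).comp
        (eFA F G).toAlgHom) := by
    apply FreeAlgebra.hom_ext
    funext x
    simp [eFA_iota]
  rw [h1]
  simp only [AlgHom.coe_comp, Function.comp_apply, AlgEquiv.toAlgHom_eq_coe, AlgHom.coe_coe]
  rw [MonoidAlgebra.lift_apply]
  simp only [FreeMonoid.lift_apply]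
  rfl

theorem prodW_iota_single (ψ : ℕ × G → ℕ × G) (w : FreeMonoid (ℕ × G)) :
    eFA F G (prodW (fun q => FreeAlgebra.ι F (ψ q)) w)
      = MonoidAlgebra.single (FreeMonoid.map ψ w) 1 := by
  induction w using FreeMonoid.recOn with
  | one =>
    have h1 : prodW (fun q => FreeAlgebra.ι F (ψ q)) 1 = 1 := rfl
    rw [h1, map_one, map_one, MonoidAlgebra.one_def]
  | of_mul x w ihw =>
    have h1 : prodW (fun q => FreeAlgebra.ι F (ψ q)) (FreeMonoid.of x * w)
        = FreeAlgebra.ι F (ψ x) * prodW (fun q => FreeAlgebra.ι F (ψ q)) w := by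
      simp [prodW, toList_of_mul]
    rw [h1, map_mul, ihw, eFA_iota, MonoidAlgebra.single_mul_single, one_mul, map_mul, map_of]

theorem eFA_rename (ψ : ℕ × G → ℕ × G) (f : FreeAlgebra F (ℕ × G)) :
    eFA F G (FreeAlgebra.lift F (fun q => FreeAlgebra.ι F (ψ q)) f)
      = MonoidAlgebra.mapDomain (FreeMonoid.map ψ) (eFA F G f) := by
  rw [lift_eq_sum, map_finsuppSum, MonoidAlgebra.mapDomain, Finsupp.mapDomain,
    MonoidAlgebra.ofCoeff_finsuppSum]
  refine Finsupp.sum_congr fun w hw => ?_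
  rw [map_smul, prodW_iota_single]
  rw [MonoidAlgebra.smul_single]
  simp

variable {A : Type} [Ring A] [Algebra F A]

theorem indep_zero {𝒜 : G → Submodule F A} (hind : iSupIndep 𝒜) (s : Finset G)
    (x : G → A) (hx : ∀ g ∈ s, x g ∈ 𝒜 g) (hsum : ∑ g ∈ s, x g = 0) :
    ∀ g ∈ s, x g = 0 := by
  classical
  intro g hg
  have h1 : x g = - ∑ k ∈ s.erase g, x k := by
    have h := Finset.add_sum_erase s x hg
    rw [hsum] at h
    linear_combination (norm := abel) h
  have h2 : x g ∈ ⨆ (j) (_ : j ≠ g), 𝒜 j := by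
    rw [h1]
    refine neg_mem (Submodule.sum_mem _ fun k hk => ?_)
    have hkg : k ≠ g := (Finset.mem_erase.mp hk).1
    exact Submodule.mem_iSup_of_mem k
      (Submodule.mem_iSup_of_mem hkg (hx k (Finset.mem_of_mem_erase hk)))
  exact Submodule.disjoint_def.mp (hind g) _ (hx g hg) h2

theorem prod_mem_deg {𝒜 : G → Submodule F A}
    (hmul : ∀ g h : G, ∀ x ∈ 𝒜 g, ∀ y ∈ 𝒜 h, x * y ∈ 𝒜 (g * h))
    (v : ℕ × G → A) (hv : ∀ p, v p ∈ 𝒜 p.2) :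
    ∀ l : List (ℕ × G), l ≠ [] → (l.map v).prod ∈ 𝒜 ((l.map Prod.snd).prod) := by
  intro l
  induction l with
  | nil => simp
  | cons p l ih =>
    intro _
    cases l with
    | nil => simpa using hv p
    | cons q l' =>
      rw [List.map_cons, List.prod_cons, List.map_cons (f := Prod.snd), List.prod_cons]
      exact hmul _ _ _ (hv p) _ (ih (by simp))

theorem prod_sub_mem (B : Submodule F A)
    (hBideal : ∀ a : A, ∀ x ∈ B, a * x ∈ B ∧ x * a ∈ B)
    (v c : ℕ × G → A) (hb : ∀ p, v p - c p ∈ B) :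
    ∀ l : List (ℕ × G), (l.map v).prod - (l.map c).prod ∈ B := by
  intro l
  induction l with
  | nil => simpa using Submodule.zero_mem B
  | cons p l ih =>
    have heq : ((p :: l).map v).prod - ((p :: l).map c).prod
        = v p * ((l.map v).prod - (l.map c).prod) + (v p - c p) * (l.map c).prod := by
      rw [List.map_cons, List.map_cons, List.prod_cons, List.prod_cons, mul_sub, sub_mul]
      abel
    rw [heq]
    exact add_mem (hBideal _ _ ih).1 (hBideal _ _ (hb p)).2

theorem lift_zero_eq (f : FreeAlgebra F (ℕ × G)) :
    FreeAlgebra.lift F (fun _ : ℕ × G => (0 : A)) f = (eFA F G f).coeff 1 • 1 := by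
  classical
  rw [lift_eq_sum]
  rw [Finsupp.sum]
  rw [Finset.sum_eq_single (1 : FreeMonoid (ℕ × G))]
  · rfl
  · intro w hw hne
    have hl : FreeMonoid.toList w ≠ [] := fun h => hne (FreeMonoid.toList.injective h)
    cases htl : FreeMonoid.toList w with
    | nil => exact absurd htl hl
    | cons p l =>
      have : prodW (fun _ : ℕ × G => (0 : A)) w = 0 := by
        rw [prodW, htl, List.map_cons, List.prod_cons, zero_mul]
      rw [this, smul_zero]
  · intro h
    rw [Finsupp.notMem_support_iff.mp h, zero_smul]

open scoped Classical in
theorem finsupp_filter_sum {α M N : Type*} [Zero M] [AddCommMonoid N] (q : α →₀ M)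
    (p : α → Prop) (h : α → M → N) (h0 : ∀ a, h a 0 = 0) :
    (q.filter p).sum h = ∑ w ∈ q.support.filter p, h w (q w) := by
  classical
  show ∑ w ∈ (q.filter p).support, h w ((q.filter p) w) = _
  rw [Finsupp.support_filter]
  refine Finset.sum_congr (by convert rfl) fun w hw => ?_
  rw [Finsupp.filter_apply_pos _ _ (Finset.mem_filter.mp hw).2]

open scoped Classical in
theorem filter_sum_eq_zero {𝒜 : G → Submodule F A}
    (hmul : ∀ g h : G, ∀ x ∈ 𝒜 g, ∀ y ∈ 𝒜 h, x * y ∈ 𝒜 (g * h)) (hind : iSupIndep 𝒜)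
    (v : ℕ × G → A) (hv : ∀ p, v p ∈ 𝒜 p.2)
    (q : MonoidAlgebra F (FreeMonoid (ℕ × G))) (hq1 : q.coeff 1 = 0)
    (hzero : (q.coeff.sum fun w r => r • prodW v w) = 0) (g : G) :
    ((q.coeff.filter fun w => degw w = g).sum fun w r => r • prodW v w) = 0 := by
  classical
  set D := q.coeff.support.image degw with hD
  set x : G → A := fun k => ∑ w ∈ q.coeff.support.filter (fun w => degw w = k), q.coeff w • prodW v w
    with hx
  have hfib : ∑ k ∈ D, x k = q.coeff.sum fun w r => r • prodW v w := by
    rw [Finsupp.sum]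
    exact Finset.sum_fiberwise_of_maps_to (fun w hw => Finset.mem_image_of_mem degw hw) _
  have hwne : ∀ w ∈ q.coeff.support, FreeMonoid.toList w ≠ [] := by
    intro w hw h
    exact Finsupp.mem_support_iff.mp hw (by
      have hw1 : w = 1 := FreeMonoid.toList.injective h
      rw [hw1]; exact hq1)
  have hxmem : ∀ k ∈ D, x k ∈ 𝒜 k := by
    intro k hk
    refine Submodule.sum_mem _ fun w hw => Submodule.smul_mem _ _ ?_
    obtain ⟨hw1, hw2⟩ := Finset.mem_filter.mp hw
    have hp := prod_mem_deg hmul v hv (FreeMonoid.toList w) (hwne w hw1)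
    rw [← hw2]
    exact hp
  have hzero' : ∑ k ∈ D, x k = 0 := by rw [hfib]; exact hzero
  have hx0 := indep_zero hind D x hxmem hzero'
  rw [finsupp_filter_sum q.coeff _ _ (fun a => by rw [zero_smul])]
  show x g = 0
  by_cases hg : g ∈ D
  · exact hx0 g hg
  · have hempty : q.coeff.support.filter (fun w => degw w = g) = ∅ :=
      Finset.filter_eq_empty_iff.mpr
        (fun {w} hw hdeg => hg (Finset.mem_image.mpr ⟨w, hw, hdeg⟩))
    rw [hx]
    beta_reduce
    rw [hempty, Finset.sum_empty]

theorem decomp {𝒜 : G → Submodule F A} (hind : iSupIndep 𝒜)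
    (B C : Submodule F A) (hBhom : B = ⨆ g, B ⊓ 𝒜 g) (hChom : C = ⨆ g, C ⊓ 𝒜 g)
    (hsum : B ⊔ C = ⊤) (k : G) (a : A) (ha : a ∈ 𝒜 k) :
    ∃ b c : A, b ∈ B ∧ b ∈ 𝒜 k ∧ c ∈ C ∧ c ∈ 𝒜 k ∧ a = b + c := by
  classical
  have haBC : a ∈ B ⊔ C := by rw [hsum]; trivial
  obtain ⟨b', hb', c', hc', heq⟩ := Submodule.mem_sup.mp haBC
  rw [hBhom, Submodule.mem_iSup_iff_exists_finsupp] at hb'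
  rw [hChom, Submodule.mem_iSup_iff_exists_finsupp] at hc'
  obtain ⟨fb, hfb, hfbsum⟩ := hb'
  obtain ⟨fc, hfc, hfcsum⟩ := hc'
  set s : Finset G := fb.support ∪ fc.support ∪ {k} with hs
  set x : G → A := fun t => fb t + fc t - (if t = k then a else 0) with hx
  have hks : k ∈ s := by simp [hs]
  have hxmem : ∀ t ∈ s, x t ∈ 𝒜 t := by
    intro t _
    have h1 : fb t ∈ 𝒜 t := (Submodule.mem_inf.mp (hfb t)).2
    have h2 : fc t ∈ 𝒜 t := (Submodule.mem_inf.mp (hfc t)).2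
    refine sub_mem (add_mem h1 h2) ?_
    split_ifs with h
    · exact h ▸ ha
    · exact zero_mem _
  have hb1 : ∑ t ∈ s, fb t = b' := by
    rw [← hfbsum]
    exact (Finsupp.sum_of_support_subset fb
      (by rw [hs]; exact Finset.subset_union_left.trans Finset.subset_union_left)
      (fun _ xi => xi) (fun _ _ => rfl)).symm
  have hc1 : ∑ t ∈ s, fc t = c' := by
    rw [← hfcsum]
    exact (Finsupp.sum_of_support_subset fc
      (by rw [hs]; exact Finset.subset_union_right.trans Finset.subset_union_left)
      (fun _ xi => xi) (fun _ _ => rfl)).symm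
  have hite : ∑ t ∈ s, (if t = k then a else 0) = a := by
    rw [Finset.sum_ite_eq' s k (fun _ => a), if_pos hks]
  have hsum0 : ∑ t ∈ s, x t = 0 := by
    rw [hx]
    rw [Finset.sum_sub_distrib, Finset.sum_add_distrib, hb1, hc1, hite, heq]
    abel
  have hx0 := indep_zero hind s x hxmem hsum0 k hks
  refine ⟨fb k, fc k, (Submodule.mem_inf.mp (hfb k)).1, (Submodule.mem_inf.mp (hfb k)).2,
    (Submodule.mem_inf.mp (hfc k)).1, (Submodule.mem_inf.mp (hfc k)).2, ?_⟩
  rw [hx] at hx0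
  simp only [if_pos rfl] at hx0
  exact (sub_eq_zero.mp hx0).symm

theorem uniqueSplit' {α : Type*} (P : α → Prop) :
    ∀ (c₁ : List α) {c₂ : List α} {d₁ d₂ : α} {r₁ r₂ : List α},
      (∀ x ∈ c₁, P x) → (∀ x ∈ c₂, P x) → ¬ P d₁ → ¬ P d₂ →
      c₁ ++ d₁ :: r₁ = c₂ ++ d₂ :: r₂ → c₁ = c₂ ∧ d₁ = d₂ ∧ r₁ = r₂ := by
  intro c₁
  induction c₁ with
  | nil =>
    intro c₂ d₁ d₂ r₁ r₂ h1 h2 hd1 hd2 heq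
    cases c₂ with
    | nil => simpa using heq
    | cons a c₂' =>
      exfalso
      have : d₁ = a := by simpa using congrArg (fun l => l.head?) heq
      exact hd1 (this ▸ h2 a (by simp))
  | cons a c₁' ih =>
    intro c₂ d₁ d₂ r₁ r₂ h1 h2 hd1 hd2 heq
    cases c₂ with
    | nil =>
      exfalso
      have : a = d₂ := by simpa using congrArg (fun l => l.head?) heq
      exact hd2 (this ▸ h1 a (by simp))
    | cons b c₂' =>
      simp only [List.cons_append, List.cons.injEq] at heq
      obtain ⟨rfl, heq2⟩ := heq
      obtain ⟨h₁, h₂, h₃⟩ := ih (fun x hx => h1 x (by simp [hx])) (fun x hx => h2 x (by simp [hx]))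
        hd1 hd2 heq2
      exact ⟨by rw [h₁], h₂, h₃⟩

theorem mul_apply_unique' {M : Type*} [Monoid M] (f g' : MonoidAlgebra F M) (z A₀ B₀ : M)
    (hz : A₀ * B₀ = z)
    (huniq : ∀ a b, f.coeff a ≠ 0 → g'.coeff b ≠ 0 → a * b = z → a = A₀ ∧ b = B₀) :
    (f * g').coeff z = f.coeff A₀ * g'.coeff B₀ := by
  classical
  rw [MonoidAlgebra.coeff_mul]
  unfold Finsupp.sum
  beta_reduce
  rw [Finset.sum_eq_single A₀]
  · rw [Finset.sum_eq_single B₀]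
    · simp [hz]
    · intro b hb hne
      beta_reduce
      split_ifs with h
      · by_cases hfa : f.coeff A₀ = 0
        · simp [hfa]
        · exact absurd (huniq _ _ hfa (Finsupp.mem_support_iff.mp hb) h).2 hne
      · rfl
    · intro h
      simp [Finsupp.notMem_support_iff.mp h]
  · intro a ha hne
    refine Finset.sum_eq_zero fun b hb => ?_
    beta_reduce
    split_ifs with h
    · exact absurd (huniq _ _ (Finsupp.mem_support_iff.mp ha)
        (Finsupp.mem_support_iff.mp hb) h).1 hne
    · rfl
  · intro h
    refine Finset.sum_eq_zero fun b hb => ?_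
    rw [Finsupp.notMem_support_iff.mp h]
    simp

theorem mul_apply_zero' {M : Type*} [Monoid M] (f g' : MonoidAlgebra F M) (z : M)
    (h : ∀ a b, f.coeff a ≠ 0 → g'.coeff b ≠ 0 → a * b ≠ z) : (f * g').coeff z = 0 := by
  classical
  rw [MonoidAlgebra.coeff_mul]
  refine Finset.sum_eq_zero fun a ha => Finset.sum_eq_zero fun b hb => ?_
  beta_reduce
  rw [if_neg (h a b (Finsupp.mem_support_iff.mp ha) (Finsupp.mem_support_iff.mp hb))]

theorem mul_single_one' {M : Type*} [Monoid M] (x : MonoidAlgebra F M) (a : M) :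
    x * MonoidAlgebra.single a 1 = MonoidAlgebra.mapDomain (· * a) x := by
  classical
  rw [MonoidAlgebra.mul_def, MonoidAlgebra.mapDomain, Finsupp.mapDomain,
    MonoidAlgebra.ofCoeff_finsuppSum]
  refine Finsupp.sum_congr fun w hw => ?_
  rw [MonoidAlgebra.coeff_single, Finsupp.sum_single_index] <;> simp

open scoped Classical in
theorem claimN (d : MonoidAlgebra F (FreeMonoid (ℕ × G))) (u0 : FreeMonoid (ℕ × G))
    (hdu0 : d.coeff u0 ≠ 0) (P : ℕ × G → Prop)
    (φ : ℕ × G → ℕ × G → ℕ × G) (y : ℕ × G → ℕ × G) (V : Set (ℕ × G))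
    (hφP : ∀ p q, P (φ p q)) (hyP : ∀ p, ¬ P (y p))
    (hyinj : ∀ p ∈ V, ∀ p' ∈ V, y p = y p' → p = p')
    (hφinj : ∀ p, Function.Injective (φ p))
    (β : ℕ × G → FreeMonoid (ℕ × G) → FreeMonoid (ℕ × G))
    (hβ : ∀ p w, β p w = FreeMonoid.map (φ p) w * FreeMonoid.of (y p))
    (t : ℕ × G → MonoidAlgebra F (FreeMonoid (ℕ × G)))
    (ht : ∀ p, t p = MonoidAlgebra.mapDomain (β p) d) :
    ∀ m m' : List (ℕ × G), (∀ p ∈ m, p ∈ V) → (∀ p ∈ m', p ∈ V) →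
      ((m.map t).prod).coeff ((m'.map (fun p => β p u0)).prod)
      = if m = m' then (d.coeff u0) ^ m.length else 0 := by
  have hβinj : ∀ p, Function.Injective (β p) := by
    intro p w w' hww
    have hl := congrArg FreeMonoid.toList hww
    simp only [hβ, toList_mul, toList_map, toList_of, List.singleton_append] at hl
    have := uniqueSplit' P ((FreeMonoid.toList w).map (φ p))
      (by rintro x hx; obtain ⟨q, -, rfl⟩ := List.mem_map.mp hx; exact hφP p q)
      (by rintro x hx; obtain ⟨q, -, rfl⟩ := List.mem_map.mp hx; exact hφP p q)
      (hyP p) (hyP p) hl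
    have hmap := this.1
    have : FreeMonoid.toList w = FreeMonoid.toList w' :=
      List.map_injective_iff.mpr (hφinj p) hmap
    exact FreeMonoid.toList.injective this
  have hsupp : ∀ p a, (t p).coeff a ≠ 0 → ∃ w, d.coeff w ≠ 0 ∧ a = β p w := by
    intro p a ha
    rw [ht p] at ha
    have h1 : a ∈ (Finsupp.mapDomain (β p) d.coeff).support := Finsupp.mem_support_iff.mpr ha
    have h2 := Finsupp.mapDomain_support h1
    obtain ⟨w, hw, rfl⟩ := Finset.mem_image.mp h2
    exact ⟨w, Finsupp.mem_support_iff.mp hw, rfl⟩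
  have key : ∀ p p', p ∈ V → p' ∈ V → ∀ (w b : FreeMonoid (ℕ × G)) (mt' : List (ℕ × G)),
      β p w * b = β p' u0 * (mt'.map fun r => β r u0).prod →
      p = p' ∧ w = u0 ∧ b = (mt'.map fun r => β r u0).prod := by
    intro p p' hp hp' w b mt' heq
    have hl := congrArg FreeMonoid.toList heq
    simp only [hβ, toList_mul, toList_map, toList_of, List.append_assoc,
      List.singleton_append] at hl
    obtain ⟨h₁, h₂, h₃⟩ := uniqueSplit' P ((FreeMonoid.toList w).map (φ p))
      (by rintro x hx; obtain ⟨q, -, rfl⟩ := List.mem_map.mp hx; exact hφP p q)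
      (by rintro x hx; obtain ⟨q, -, rfl⟩ := List.mem_map.mp hx; exact hφP p' q)
      (hyP p) (hyP p') hl
    have hpp : p = p' := hyinj p hp p' hp' h₂
    subst hpp
    have hw : w = u0 := FreeMonoid.toList.injective (List.map_injective_iff.mpr (hφinj p) h₁)
    refine ⟨rfl, hw, ?_⟩
    apply FreeMonoid.toList.injective
    simp only [hβ]
    exact h₃
  have htval : ∀ p, (t p).coeff (β p u0) = d.coeff u0 := by
    intro p
    rw [ht p]
    exact Finsupp.mapDomain_apply (hβinj p) d.coeff u0
  intro m
  induction m with
  | nil =>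
    intro m' _ hm'
    cases m' with
    | nil => simp [MonoidAlgebra.one_def]
    | cons p' mt' =>
      have hne : (((p' :: mt').map fun p => β p u0).prod) ≠ 1 := by
        intro hcontra
        have := congrArg FreeMonoid.toList hcontra
        simp [hβ, toList_mul, toList_map, toList_of] at this
      rw [List.map_nil, List.prod_nil]
      rw [MonoidAlgebra.one_def]
      rw [if_neg (by simp)]
      rw [MonoidAlgebra.coeff_single, Finsupp.single_apply, if_neg (fun hc => hne hc.symm)]
  | cons p mt ih =>
    intro m' hm hm'
    have hpV : p ∈ V := hm p (by simp)
    have hmtV : ∀ q ∈ mt, q ∈ V := fun q hq => hm q (by simp [hq])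
    rw [List.map_cons, List.prod_cons]
    cases m' with
    | nil =>
      rw [List.map_nil, List.prod_nil]
      rw [if_neg (by simp)]
      refine mul_apply_zero' _ _ _ fun a b hta hb hab => ?_
      obtain ⟨w, hw, rfl⟩ := hsupp p a hta
      have := congrArg FreeMonoid.toList hab
      simp [hβ, toList_mul, toList_map, toList_of, toList_one] at this
    | cons p' mt' =>
      have hp'V : p' ∈ V := hm' p' (by simp)
      have hmt'V : ∀ q ∈ mt', q ∈ V := fun q hq => hm' q (by simp [hq])
      rw [List.map_cons, List.prod_cons]
      by_cases hpp : p = p'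
      · subst hpp
        rw [mul_apply_unique' _ _ _ (β p u0) ((mt'.map fun r => β r u0).prod) rfl ?_]
        · rw [htval p, ih mt' hmtV hmt'V]
          by_cases hmm : mt = mt'
          · subst hmm
            simp [pow_succ, mul_comm]
          · simp [hmm]
        · intro a b hta hb hab
          obtain ⟨w, hw, rfl⟩ := hsupp p a hta
          obtain ⟨-, hw2, hb2⟩ := key p p hpV hpV w b mt' hab
          exact ⟨by rw [hw2], hb2⟩
      · rw [if_neg (by simp [hpp])]
        refine mul_apply_zero' _ _ _ fun a b hta hb hab => ?_
        obtain ⟨w, hw, rfl⟩ := hsupp p a hta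
        exact hpp (key p p' hpV hp'V w b mt' hab).1

end PI5Aux

/-- let `A` be a `G`-graded `F`-algebra with `A = B + C`, where `B` is a nonzero
homogeneous two-sided ideal and `C` a homogeneous subalgebra.  If both `B` and `C` satisfy
graded polynomial identities, then `A` satisfies a graded polynomial identity. -/
theorem stmt5 {F : Type} [Field F] {G : Type} [Group G]
    {A : Type} [Ring A] [Algebra F A] (𝒜 : G → Submodule F A)
    (hgr : IsGrading F G 𝒜)
    (B C : Submodule F A)
    (hBideal : ∀ a : A, ∀ x ∈ B, a * x ∈ B ∧ x * a ∈ B)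
    (hBne : B ≠ ⊥)
    (hBhom : B = ⨆ g, B ⊓ 𝒜 g)
    (hCsub : ∀ x ∈ C, ∀ y ∈ C, x * y ∈ C)
    (hChom : C = ⨆ g, C ⊓ 𝒜 g)
    (hsum : B ⊔ C = ⊤)
    (hBPI : GrPIOn F G 𝒜 B) (hCPI : GrPIOn F G 𝒜 C) :
    GrPIOn F G 𝒜 ⊤ := by
  classical
  obtain ⟨hmul, hsupr, hind⟩ := hgr
  obtain ⟨fB, hfB0, hfB⟩ := hBPI
  obtain ⟨fC, hfC0, hfC⟩ := hCPI
  obtain ⟨xB, hxBmem, hxB0⟩ := (Submodule.ne_bot_iff B).mp hBne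
  haveI : Nontrivial A := nontrivial_of_ne xB 0 hxB0
  have hsmul1 : ∀ r : F, r • (1 : A) = 0 → r = 0 := by
    intro r hr
    by_contra hr0
    have h2 := congrArg (fun z => r⁻¹ • z) hr
    simp only [smul_smul, inv_mul_cancel₀ hr0, one_smul, smul_zero] at h2
    exact one_ne_zero h2
  have hqB0 : eFA F G fB ≠ 0 := fun h => hfB0 ((map_eq_zero_iff _ (eFA F G).injective).mp h)
  have hqC0 : eFA F G fC ≠ 0 := fun h => hfC0 ((map_eq_zero_iff _ (eFA F G).injective).mp h)
  have hqB1 : (eFA F G fB).coeff 1 = 0 := by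
    have h0 := hfB (fun _ => 0) (fun p => B.zero_mem) (fun p => (𝒜 p.2).zero_mem)
    rw [lift_zero_eq] at h0
    exact hsmul1 _ h0
  have hqC1 : (eFA F G fC).coeff 1 = 0 := by
    have h0 := hfC (fun _ => 0) (fun p => C.zero_mem) (fun p => (𝒜 p.2).zero_mem)
    rw [lift_zero_eq] at h0
    exact hsmul1 _ h0
  -- choose a word u0 in the support of fC and its degree g
  obtain ⟨u0, hu0⟩ := Finsupp.support_nonempty_iff.mpr
    (fun h => hqC0 (MonoidAlgebra.coeff_eq_zero.mp h))
  have hqCu0 : (eFA F G fC).coeff u0 ≠ 0 := Finsupp.mem_support_iff.mp hu0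
  set g : G := degw u0 with hgdef
  set qC' : MonoidAlgebra F (FreeMonoid (ℕ × G)) :=
    MonoidAlgebra.ofCoeff ((eFA F G fC).coeff.filter (fun w => degw w = g)) with hqC'def
  set fC' : FreeAlgebra F (ℕ × G) := (eFA F G).symm qC' with hfC'def
  have heC' : eFA F G fC' = qC' := (eFA F G).apply_symm_apply qC'
  have hqC'u0 : qC'.coeff u0 = (eFA F G fC).coeff u0 := by
    rw [hqC'def]
    exact Finsupp.filter_apply_pos _ _ rfl
  have hqC'u0ne : qC'.coeff u0 ≠ 0 := by rw [hqC'u0]; exact hqCu0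
  have hqC'supp : ∀ w, qC'.coeff w ≠ 0 → (eFA F G fC).coeff w ≠ 0 ∧ degw w = g := by
    intro w hw
    rw [hqC'def, MonoidAlgebra.coeff_ofCoeff, Finsupp.filter_apply] at hw
    by_cases hdw : degw w = g
    · rw [if_pos hdw] at hw; exact ⟨hw, hdw⟩
    · rw [if_neg hdw] at hw; exact absurd rfl hw
  -- vanishing of fC' on homogeneous substitutions with values in C
  have hfC'van : ∀ u : ℕ × G → A, (∀ p, u p ∈ C) → (∀ p, u p ∈ 𝒜 p.2) →
      FreeAlgebra.lift F u fC' = 0 := by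
    intro u huC huA
    rw [lift_eq_sum, heC', hqC'def]
    refine filter_sum_eq_zero hmul hind u huA (eFA F G fC) hqC1 ?_ g
    rw [← lift_eq_sum]
    exact hfC u huC huA
  -- the combinatorial data
  set V : Finset (ℕ × G) :=
    (eFA F G fB).coeff.support.biUnion (fun w => (FreeMonoid.toList w).toFinset) with hVdef
  set idx : ℕ × G → ℕ := fun p => if h : p ∈ V then (V.equivFin ⟨p, h⟩ : ℕ) else 0 with hidxdef
  have hidxinj : ∀ p ∈ V, ∀ p' ∈ V, idx p = idx p' → p = p' := by
    intro p hp p' hp' h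
    rw [hidxdef] at h
    simp only [dif_pos hp, dif_pos hp'] at h
    have h2 := V.equivFin.injective (Fin.ext h)
    exact Subtype.ext_iff.mp h2
  set φ : ℕ × G → ℕ × G → ℕ × G := fun p q => (Nat.pair (idx p) (q.1 + 1), q.2) with hφdef
  set y : ℕ × G → ℕ × G := fun p => (Nat.pair (idx p) 0, g⁻¹ * p.2) with hydef
  set P : ℕ × G → Prop := fun ℓ => (Nat.unpair ℓ.1).2 ≠ 0 with hPdef
  have hφP : ∀ p q, P (φ p q) := by
    intro p q
    rw [hPdef, hφdef]
    simp [Nat.unpair_pair]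
  have hyP : ∀ p, ¬ P (y p) := by
    intro p
    rw [hPdef, hydef]
    simp [Nat.unpair_pair]
  have hyinj : ∀ p ∈ (↑V : Set (ℕ × G)), ∀ p' ∈ (↑V : Set (ℕ × G)), y p = y p' → p = p' := by
    intro p hp p' hp' h
    rw [hydef] at h
    have h1 : Nat.pair (idx p) 0 = Nat.pair (idx p') 0 := congrArg Prod.fst h
    exact hidxinj p hp p' hp' (Nat.pair_eq_pair.mp h1).1
  have hφinj : ∀ p, Function.Injective (φ p) := by
    intro p q q' h
    have h0 : ((Nat.pair (idx p) (q.1 + 1), q.2) : ℕ × G)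
        = (Nat.pair (idx p) (q'.1 + 1), q'.2) := h
    have h12 := Prod.mk.inj h0
    exact Prod.ext (Nat.succ_injective (Nat.pair_eq_pair.mp h12.1).2) h12.2
  set β : ℕ × G → FreeMonoid (ℕ × G) → FreeMonoid (ℕ × G) :=
    fun p w => FreeMonoid.map (φ p) w * FreeMonoid.of (y p) with hβdef
  set σ : ℕ × G → FreeAlgebra F (ℕ × G) :=
    fun p => (FreeAlgebra.lift F (fun q => FreeAlgebra.ι F (φ p q)) fC')
      * FreeAlgebra.ι F (y p) with hσdef
  set t : ℕ × G → MonoidAlgebra F (FreeMonoid (ℕ × G)) :=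
    fun p => MonoidAlgebra.mapDomain (β p) qC' with htdef
  have het : ∀ p, eFA F G (σ p) = t p := by
    intro p
    rw [hσdef]
    beta_reduce
    rw [map_mul, eFA_rename, eFA_iota, heC', mul_single_one']
    unfold MonoidAlgebra.mapDomain
    rw [MonoidAlgebra.coeff_ofCoeff, ← Finsupp.mapDomain_comp]
    rfl
  -- the composition lemma for substitutions
  have hcomp : ∀ (u : ℕ × G → A) (ψ : ℕ × G → ℕ × G) (f : FreeAlgebra F (ℕ × G)),
      FreeAlgebra.lift F u (FreeAlgebra.lift F (fun q => FreeAlgebra.ι F (ψ q)) f)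
      = FreeAlgebra.lift F (fun q => u (ψ q)) f := by
    intro u ψ f
    have h1 : (FreeAlgebra.lift F u).comp (FreeAlgebra.lift F (fun q => FreeAlgebra.ι F (ψ q)))
        = FreeAlgebra.lift F (fun q => u (ψ q)) := by
      apply FreeAlgebra.hom_ext
      funext q
      simp
    exact DFunLike.congr_fun h1 f
  refine ⟨FreeAlgebra.lift F σ fB, ?_, ?_⟩
  · -- nonzero
    intro hzero
    obtain ⟨m0, hm0⟩ := Finsupp.support_nonempty_iff.mpr
      (fun h => hqB0 (MonoidAlgebra.coeff_eq_zero.mp h))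
    have hqBm0 : (eFA F G fB).coeff m0 ≠ 0 := Finsupp.mem_support_iff.mp hm0
    have hlet : ∀ m, m ∈ (eFA F G fB).coeff.support →
        ∀ p ∈ FreeMonoid.toList m, p ∈ (↑V : Set (ℕ × G)) := by
      intro m hm p hp
      rw [hVdef]
      exact Finset.mem_coe.mpr (Finset.mem_biUnion.mpr ⟨m, hm, List.mem_toFinset.mpr hp⟩)
    have hEh : eFA F G (FreeAlgebra.lift F σ fB)
        = (eFA F G fB).coeff.sum fun m r => r • ((FreeMonoid.toList m).map t).prod := by
      rw [lift_eq_sum (T := FreeAlgebra F (ℕ × G)), map_finsuppSum]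
      refine Finsupp.sum_congr fun m hm => ?_
      rw [map_smul]
      congr 1
      rw [prodW, map_list_prod, List.map_map]
      exact congrArg List.prod (List.map_congr_left (fun p _ => het p))
    have hN := claimN qC' u0 hqC'u0ne P φ y (↑V : Set (ℕ × G)) hφP hyP hyinj hφinj
      β (fun p w => rfl) t (fun p => rfl)
    have hcoeff : (eFA F G (FreeAlgebra.lift F σ fB)).coeff
        (((FreeMonoid.toList m0).map (fun p => β p u0)).prod)
        = (eFA F G fB).coeff m0 * (qC'.coeff u0) ^ (FreeMonoid.toList m0).length := by
      rw [hEh, MonoidAlgebra.coeff_finsuppSum, Finsupp.sum_apply]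
      unfold Finsupp.sum
      beta_reduce
      rw [Finset.sum_eq_single m0]
      · rw [MonoidAlgebra.coeff_smul_apply, hN (FreeMonoid.toList m0) (FreeMonoid.toList m0)
          (hlet m0 hm0) (hlet m0 hm0), if_pos rfl, smul_eq_mul]
      · intro m hm hne
        rw [MonoidAlgebra.coeff_smul_apply, hN (FreeMonoid.toList m) (FreeMonoid.toList m0)
          (hlet m hm) (hlet m0 hm0),
          if_neg (fun hc => hne (FreeMonoid.toList.injective hc)), smul_zero]
      · intro h
        rw [Finsupp.notMem_support_iff.mp h, zero_smul]
        rfl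
    rw [hzero, map_zero] at hcoeff
    exact mul_ne_zero hqBm0 (pow_ne_zero _ hqC'u0ne) hcoeff.symm
  · -- graded identity
    intro v _ hv
    have hdec : ∀ p : ℕ × G, ∃ b c : A,
        b ∈ B ∧ b ∈ 𝒜 p.2 ∧ c ∈ C ∧ c ∈ 𝒜 p.2 ∧ v p = b + c :=
      fun p => decomp hind B C hBhom hChom hsum p.2 (v p) (hv p)
    choose bf cf hbB hbA hcC hcA hvbc using hdec
    -- value of σ p under v
    have hvh : FreeAlgebra.lift F v (FreeAlgebra.lift F σ fB)
        = FreeAlgebra.lift F (fun p => FreeAlgebra.lift F v (σ p)) fB := by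
      have h1 : (FreeAlgebra.lift F v).comp (FreeAlgebra.lift F σ)
          = FreeAlgebra.lift F (fun p => FreeAlgebra.lift F v (σ p)) := by
        apply FreeAlgebra.hom_ext
        funext p
        simp
      exact DFunLike.congr_fun h1 fB
    have hsigma_eval : ∀ p, FreeAlgebra.lift F v (σ p)
        = (FreeAlgebra.lift F (fun q => v (φ p q)) fC') * v (y p) := by
      intro p
      rw [hσdef]
      beta_reduce
      rw [map_mul, hcomp, FreeAlgebra.lift_ι_apply]
    have hu_memB : ∀ p, FreeAlgebra.lift F (fun q => v (φ p q)) fC' ∈ B := by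
      intro p
      have hφsnd : ∀ q : ℕ × G, (φ p q).2 = q.2 := fun q => rfl
      have hvanish : FreeAlgebra.lift F (fun q => cf (φ p q)) fC' = 0 := by
        refine hfC'van _ (fun q => hcC (φ p q)) (fun q => ?_)
        have := hcA (φ p q)
        rwa [hφsnd q] at this
      have hdiff : FreeAlgebra.lift F (fun q => v (φ p q)) fC'
          - FreeAlgebra.lift F (fun q => cf (φ p q)) fC' ∈ B := by
        rw [lift_eq_sum, lift_eq_sum, heC', ← Finsupp.sum_sub]
        refine Submodule.sum_mem B fun w hw => ?_
        beta_reduce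
        rw [← smul_sub]
        refine B.smul_mem _ ?_
        refine prod_sub_mem B hBideal _ _ (fun q => ?_) (FreeMonoid.toList w)
        have := hvbc (φ p q)
        have h2 : v (φ p q) - cf (φ p q) = bf (φ p q) := by rw [this]; abel
        rw [h2]
        exact hbB (φ p q)
      rwa [hvanish, sub_zero] at hdiff
    have hu_memA : ∀ p, FreeAlgebra.lift F (fun q => v (φ p q)) fC' ∈ 𝒜 g := by
      intro p
      rw [lift_eq_sum, heC']
      refine Submodule.sum_mem _ fun w hw => Submodule.smul_mem _ _ ?_
      obtain ⟨hw1, hw2⟩ := hqC'supp w (Finsupp.mem_support_iff.mp hw)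
      have hwne : FreeMonoid.toList w ≠ [] := by
        intro hnil
        exact hw1 (by rw [FreeMonoid.toList.injective hnil]; exact hqC1)
      have hp := prod_mem_deg hmul (fun q => v (φ p q))
        (fun q => by have := hv (φ p q); rwa [(rfl : (φ p q).2 = q.2)] at this)
        (FreeMonoid.toList w) hwne
      rw [← hw2]
      exact hp
    have hwB : ∀ p, FreeAlgebra.lift F v (σ p) ∈ B := by
      intro p
      rw [hsigma_eval p]
      exact (hBideal _ _ (hu_memB p)).2
    have hwA : ∀ p, FreeAlgebra.lift F v (σ p) ∈ 𝒜 p.2 := by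
      intro p
      rw [hsigma_eval p]
      have h1 := hmul g ((y p).2) _ (hu_memA p) _ (hv (y p))
      have h2 : g * (y p).2 = p.2 := by
        rw [hydef]
        beta_reduce
        rw [← mul_assoc, mul_inv_cancel, one_mul]
      rwa [h2] at h1
    rw [hvh]
    exact hfB _ hwB hwA
end

section
/- Let A be a G-graded algebra with A = B + C, where B is a homogeneous ideal satisfying a multilinear graded identity f(x₁^{(g₁)},…,x_m^{(g_m)}) and C is a homogeneous subalgebra satisfying an ordinary multilinear identity g(x₁,…,x_n). Then A satisfies the graded identity f(g(x₁₁^{(g₁)},x₁₂^{(1)},…,x₁ₙ^{(1)}),…,g(x_{m1}^{(g_m)},x_{m2}^{(1)},…,x_{mn}^{(1)})), where the inner substitutions use one variable of degree g_i and n−1 variables of neutral degree 1. -/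
/-- Evaluation of the multilinear polynomial `∑_{σ ∈ Sₙ} c σ • x_{σ(1)} ⋯ x_{σ(n)}`
at the tuple `w`. -/
noncomputable def evalMulti {F A : Type} [Field F] [Ring A] [Algebra F A] {n : ℕ}
    (c : Equiv.Perm (Fin n) → F) (w : Fin n → A) : A :=
  ∑ σ : Equiv.Perm (Fin n), c σ • (List.ofFn (fun i => w (σ i))).prod


lemma aux_prod_one {M : Type*} [Monoid M] : ∀ (k : ℕ) (f : Fin k → M) (j₀ : Fin k) (a : M),
    (∀ j, f j = if j = j₀ then a else 1) → (List.ofFn f).prod = a := by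
  intro k
  induction k with
  | zero => exact fun f j₀ => j₀.elim0
  | succ k ih =>
    intro f j₀ a hf
    rw [List.ofFn_succ, List.prod_cons]
    rcases Fin.eq_zero_or_eq_succ j₀ with h0 | ⟨j, rfl⟩
    · subst h0
      have : (List.ofFn (fun i : Fin k => f i.succ)).prod = 1 := by
        apply List.prod_eq_one
        intro x hx
        obtain ⟨i, rfl⟩ := List.mem_ofFn.mp hx
        simp [hf i.succ, Fin.succ_ne_zero]
      rw [this, hf 0, if_pos rfl, mul_one]
    · have h0 : f 0 = 1 := by simp [hf 0, (Fin.succ_ne_zero j).symm]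
      rw [h0, one_mul]
      apply ih (fun i => f i.succ) j a
      intro i
      rw [hf i.succ]
      simp [Fin.succ_inj]

section
variable {F : Type} [Field F] {G : Type} [Group G]
    {A : Type} [Ring A] [Algebra F A] (𝒜 : G → Submodule F A)

lemma aux_prod_mem (hmul : ∀ g h : G, ∀ x ∈ 𝒜 g, ∀ y ∈ 𝒜 h, x * y ∈ 𝒜 (g * h)) :
    ∀ (k : ℕ), 0 < k → ∀ (f : Fin k → A) (δ : Fin k → G),
    (∀ j, f j ∈ 𝒜 (δ j)) → (List.ofFn f).prod ∈ 𝒜 ((List.ofFn δ).prod) := by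
  intro k
  induction k with
  | zero => omega
  | succ k ih =>
    intro _ f δ hf
    rw [List.ofFn_succ, List.ofFn_succ, List.prod_cons, List.prod_cons]
    rcases Nat.eq_zero_or_pos k with rfl | hk
    · simpa using hf 0
    · exact hmul _ _ _ (hf 0) _ (ih hk _ _ fun j => hf j.succ)

lemma aux_prod_B (B : Submodule F A)
    (hBideal : ∀ a : A, ∀ x ∈ B, a * x ∈ B ∧ x * a ∈ B) :
    ∀ (k : ℕ) (f : Fin k → A) (j₀ : Fin k), f j₀ ∈ B → (List.ofFn f).prod ∈ B := by
  intro k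
  induction k with
  | zero => exact fun f j₀ => j₀.elim0
  | succ k ih =>
    intro f j₀ hj
    rw [List.ofFn_succ, List.prod_cons]
    rcases Fin.eq_zero_or_eq_succ j₀ with h0 | ⟨j, rfl⟩
    · exact (hBideal _ _ (h0 ▸ hj)).2
    · exact (hBideal _ _ (ih (fun i => f i.succ) j hj)).1

omit [Group G] in
lemma aux_key
    (htop : (⨆ g, 𝒜 g) = ⊤) (hindep : iSupIndep 𝒜)
    (B C : Submodule F A)
    (hBhom : B = ⨆ g, B ⊓ 𝒜 g)
    (hChom : C = ⨆ g, C ⊓ 𝒜 g)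
    (hsum : B ⊔ C = ⊤) (g : G) (x : A) (hx : x ∈ 𝒜 g) :
    x ∈ (B ⊓ 𝒜 g) ⊔ (C ⊓ 𝒜 g) := by
  classical
  have hint : DirectSum.IsInternal 𝒜 :=
    (DirectSum.isInternal_submodule_iff_iSupIndep_and_iSup_eq_top 𝒜).mpr ⟨hindep, htop⟩
  letI : DirectSum.Decomposition 𝒜 := hint.chooseDecomposition
  set D : G → Submodule F A := fun h => (B ⊓ 𝒜 h) ⊔ (C ⊓ 𝒜 h) with hD
  have hDtop : (⨆ h, D h) = ⊤ := by
    apply top_unique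
    rw [← hsum]
    apply sup_le
    · rw [hBhom]; exact iSup_mono fun h => le_sup_left
    · rw [hChom]; exact iSup_mono fun h => le_sup_right
  have hxD : x ∈ ⨆ h, D h := hDtop.symm ▸ Submodule.mem_top
  obtain ⟨f, hf, hfx⟩ := (Submodule.mem_iSup_iff_exists_finsupp D x).mp hxD
  have hcomp : ((DirectSum.decompose 𝒜 x g : 𝒜 g) : A) = f g := by
    rw [← hfx]
    rw [Finsupp.sum, DirectSum.decompose_sum, DFinsupp.finset_sum_apply]
    have : ∀ h ∈ f.support, ((DirectSum.decompose 𝒜 (f h)) g : A)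
        = if h = g then f h else 0 := by
      intro h _
      have hmem : f h ∈ 𝒜 h := by
        have := hf h
        rw [hD] at this
        exact (sup_le inf_le_right inf_le_right : D h ≤ 𝒜 h) this
      by_cases hhg : h = g
      · subst hhg
        simp [DirectSum.decompose_of_mem_same 𝒜 hmem]
      · simp [DirectSum.decompose_of_mem_ne 𝒜 hmem hhg, hhg]
    push_cast
    rw [Finset.sum_congr rfl this]
    rw [Finset.sum_ite_eq' f.support g (fun h => f h)]
    by_cases hgs : g ∈ f.support
    · rw [if_pos hgs]
    · rw [if_neg hgs, (Finsupp.notMem_support_iff.mp hgs)]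
  have : x = f g := by rw [← hcomp, DirectSum.decompose_of_mem_same 𝒜 hx]
  rw [this]
  exact hf g
end


/-- `A` a `G`-graded algebra, `A = B + C` with `B` a homogeneous ideal
satisfying the multilinear graded identity `f(x₁^{(g₁)},…,x_m^{(g_m)})` (coefficients `c`,
degrees `d`) and `C` a homogeneous subalgebra satisfying the ordinary multilinear identity
`g(x₁,…,x_n)` (coefficients `e`).  Then `A` satisfies the graded identity
`f(g(x₁₁^{(g₁)},x₁₂^{(1)},…,x₁ₙ^{(1)}),…,g(x_{m1}^{(g_m)},x_{m2}^{(1)},…,x_{mn}^{(1)}))`,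
where in the `i`-th inner copy of `g` the first variable has degree `gᵢ` and the remaining
`n−1` variables have neutral degree `1`. -/
theorem stmt7 {F : Type} [Field F] {G : Type} [Group G]
    {A : Type} [Ring A] [Algebra F A] (𝒜 : G → Submodule F A)
    (hmul : ∀ g h : G, ∀ x ∈ 𝒜 g, ∀ y ∈ 𝒜 h, x * y ∈ 𝒜 (g * h))
    (htop : (⨆ g, 𝒜 g) = ⊤) (hindep : iSupIndep 𝒜)
    (B C : Submodule F A)
    (hBideal : ∀ a : A, ∀ x ∈ B, a * x ∈ B ∧ x * a ∈ B)
    (hBhom : B = ⨆ g, B ⊓ 𝒜 g)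
    (hCsub : ∀ x ∈ C, ∀ y ∈ C, x * y ∈ C)
    (hChom : C = ⨆ g, C ⊓ 𝒜 g)
    (hsum : B ⊔ C = ⊤)
    {m n : ℕ} (hn : 0 < n)
    -- the multilinear graded identity `f` of `B`, with coefficients `c` and degrees `d`
    (c : Equiv.Perm (Fin m) → F) (d : Fin m → G)
    (hfB : ∀ v : Fin m → A, (∀ i, v i ∈ B) → (∀ i, v i ∈ 𝒜 (d i)) → evalMulti c v = 0)
    -- the ordinary multilinear identity `g` of `C`, with coefficients `e`
    (e : Equiv.Perm (Fin n) → F)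
    (hgC : ∀ w : Fin n → A, (∀ j, w j ∈ C) → evalMulti e w = 0) :
    ∀ w : Fin m → Fin n → A,
      (∀ i, w i ⟨0, hn⟩ ∈ 𝒜 (d i)) →
      (∀ i (j : Fin n), j ≠ ⟨0, hn⟩ → w i j ∈ 𝒜 (1 : G)) →
      evalMulti c (fun i => evalMulti e (w i)) = 0 := by
  classical
  intro w hw0 hw1
  have key : ∀ i, evalMulti e (w i) ∈ B ⊓ 𝒜 (d i) := by
    intro i
    set δ : Fin n → G := fun j => if j = ⟨0, hn⟩ then d i else 1 with hδ
    have hwδ : ∀ j, w i j ∈ 𝒜 (δ j) := by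
      intro j
      by_cases h : j = (⟨0, hn⟩ : Fin n)
      · rw [hδ]; simpa [h] using hw0 i
      · rw [hδ]; simpa [h] using hw1 i j h
    choose b hb cc hcc hbc using fun j =>
      Submodule.mem_sup.mp (aux_key 𝒜 htop hindep B C hBhom hChom hsum (δ j) (w i j) (hwδ j))
    set M : MultilinearMap F (fun _ : Fin n => A) A :=
      ∑ σ : Equiv.Perm (Fin n), e σ • (MultilinearMap.mkPiAlgebraFin F n A).domDomCongr σ
      with hM
    have hMeval : ∀ u : Fin n → A, M u = evalMulti e u := by
      intro u
      simp [hM, evalMulti, MultilinearMap.sum_apply, MultilinearMap.smul_apply,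
        MultilinearMap.domDomCongr_apply, MultilinearMap.mkPiAlgebraFin_apply]
    rw [← hMeval, show w i = (fun j => b j) + (fun j => cc j) from
      funext fun j => (hbc j).symm, M.map_add_univ]
    apply Submodule.sum_mem
    intro s _
    rcases Finset.eq_empty_or_nonempty s with rfl | ⟨j₀, hj₀⟩
    · have hpw : (∅ : Finset (Fin n)).piecewise (fun j => b j) (fun j => cc j)
          = fun j => cc j := Finset.piecewise_empty _ _
      rw [hpw, hMeval, hgC _ (fun j => (hcc j).1)]
      exact Submodule.zero_mem _
    · rw [hM, MultilinearMap.sum_apply]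
      apply Submodule.sum_mem
      intro σ _
      rw [MultilinearMap.smul_apply]
      apply Submodule.smul_mem
      rw [MultilinearMap.domDomCongr_apply, MultilinearMap.mkPiAlgebraFin_apply]
      have hdeg : (List.ofFn fun j => δ (σ j)).prod = d i := by
        apply aux_prod_one n _ (σ.symm ⟨0, hn⟩) (d i)
        intro j
        rw [hδ]
        simp only []
        by_cases h : j = σ.symm ⟨0, hn⟩
        · simp [h]
        · have : σ j ≠ ⟨0, hn⟩ := fun hc => h (by rw [← hc]; simp)
          simp [h, this]
      refine Submodule.mem_inf.mpr ⟨?_, ?_⟩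
      · apply aux_prod_B B hBideal n _ (σ.symm j₀)
        have : σ (σ.symm j₀) = j₀ := σ.apply_symm_apply j₀
        rw [this, Finset.piecewise_eq_of_mem _ _ _ hj₀]
        exact (hb j₀).1
      · rw [← hdeg]
        apply aux_prod_mem 𝒜 hmul n hn
        intro j
        by_cases h : σ j ∈ s
        · rw [Finset.piecewise_eq_of_mem _ _ _ h]
          exact (hb _).2
        · rw [Finset.piecewise_eq_of_notMem _ _ _ h]
          exact (hcc _).2
  exact hfB _ (fun i => (Submodule.mem_inf.mp (key i)).1)
    (fun i => (Submodule.mem_inf.mp (key i)).2)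
end

section
/- Let D = F⟨X⟩ be the free associative algebra and A = M₂(D) with the ℤ₂-grading A₀ = diagonal, A₁ = off-diagonal. Let B be the subalgebra of matrices with zero second row and C the subalgebra of matrices with zero first row. Then A = B ⊕ C is a direct sum of homogeneous subalgebras, both B and C satisfy the graded identity x₁^{(1)}x₂^{(1)} = 0, yet A satisfies no ℤ₂-graded polynomial identity. -/
noncomputable section

variable (F : Type) [Field F]

/-- `D = F⟨X⟩`, the free associative algebra on countably many variables. -/
abbrev D := FreeAlgebra F ℕ

/-- `A = M₂(D)`. -/
abbrev MatD := Matrix (Fin 2) (Fin 2) (D F)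

/-- The even component `A₀`: diagonal matrices. -/
def diagPart : Submodule F (MatD F) where
  carrier := {M | M 0 1 = 0 ∧ M 1 0 = 0}
  add_mem' := by intro a b ha hb; exact ⟨by simp [Matrix.add_apply, ha.1, hb.1],
    by simp [Matrix.add_apply, ha.2, hb.2]⟩
  zero_mem' := by constructor <;> simp
  smul_mem' := by intro c a ha; exact ⟨by simp [Matrix.smul_apply, ha.1],
    by simp [Matrix.smul_apply, ha.2]⟩

/-- The odd component `A₁`: off-diagonal matrices. -/
def offDiagPart : Submodule F (MatD F) where
  carrier := {M | M 0 0 = 0 ∧ M 1 1 = 0}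
  add_mem' := by intro a b ha hb; exact ⟨by simp [Matrix.add_apply, ha.1, hb.1],
    by simp [Matrix.add_apply, ha.2, hb.2]⟩
  zero_mem' := by constructor <;> simp
  smul_mem' := by intro c a ha; exact ⟨by simp [Matrix.smul_apply, ha.1],
    by simp [Matrix.smul_apply, ha.2]⟩

/-- The `ℤ₂`-grading `A = A₀ ⊕ A₁` on `A = M₂(D)`. -/
def matGrading : ZMod 2 → Submodule F (MatD F) :=
  fun g => if g = 0 then diagPart F else offDiagPart F

end

noncomputable section

variable (F : Type) [Field F]

/-- `B`: matrices with zero second row. -/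
def zeroSecondRow : Submodule F (MatD F) where
  carrier := {M | M 1 0 = 0 ∧ M 1 1 = 0}
  add_mem' := by intro a b ha hb; exact ⟨by simp [Matrix.add_apply, ha.1, hb.1],
    by simp [Matrix.add_apply, ha.2, hb.2]⟩
  zero_mem' := by constructor <;> simp
  smul_mem' := by intro c a ha; exact ⟨by simp [Matrix.smul_apply, ha.1],
    by simp [Matrix.smul_apply, ha.2]⟩

/-- `C`: matrices with zero first row. -/
def zeroFirstRow : Submodule F (MatD F) where
  carrier := {M | M 0 0 = 0 ∧ M 0 1 = 0}
  add_mem' := by intro a b ha hb; exact ⟨by simp [Matrix.add_apply, ha.1, hb.1],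
    by simp [Matrix.add_apply, ha.2, hb.2]⟩
  zero_mem' := by constructor <;> simp
  smul_mem' := by intro c a ha; exact ⟨by simp [Matrix.smul_apply, ha.1],
    by simp [Matrix.smul_apply, ha.2]⟩

end


noncomputable section AuxSect
variable (F : Type) [Field F]


/-- encoding of (variable, row) into ℕ -/
def enc' (p : ℕ × ZMod 2) (r : ZMod 2) : ℕ := Nat.pair p.1 (Nat.pair p.2.val r.val)

lemma enc'_inj {p q : ℕ × ZMod 2} {r s : ZMod 2} (h : enc' p r = enc' q s) :
    p = q ∧ r = s := by
  unfold enc' at h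
  rw [Nat.pair_eq_pair] at h
  obtain ⟨h1, h2⟩ := h
  rw [Nat.pair_eq_pair] at h2
  exact ⟨Prod.ext h1 (ZMod.val_injective 2 h2.1), ZMod.val_injective 2 h2.2⟩

/-- the generic substitution -/
def z (r : Fin 2) : ZMod 2 := r

def v0' : ℕ × ZMod 2 → MatD F := fun p =>
  Matrix.of fun r c => if z c = z r + p.2 then FreeAlgebra.ι F (enc' p (z r)) else 0

def Wl : List (ℕ × ZMod 2) → ZMod 2 → List ℕ
  | [], _ => []
  | p :: t, r => enc' p r :: Wl t (r + p.2)

def degl : List (ℕ × ZMod 2) → ZMod 2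
  | [] => 0
  | p :: t => p.2 + degl t

lemma Wl_inj : ∀ (l₁ l₂ : List (ℕ × ZMod 2)) (r : ZMod 2), Wl l₁ r = Wl l₂ r → l₁ = l₂ := by
  intro l₁
  induction l₁ with
  | nil => intro l₂ r h; cases l₂ with
    | nil => rfl
    | cons q t => simp [Wl] at h
  | cons p t ih =>
    intro l₂ r h
    cases l₂ with
    | nil => simp [Wl] at h
    | cons q t' =>
      simp only [Wl, List.cons.injEq] at h
      obtain ⟨hpq, hr⟩ := enc'_inj h.1
      subst hpq
      rw [ih t' (r + p.2) h.2]

def dmon (l : List ℕ) : D F := (l.map (FreeAlgebra.ι F)).prod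

/-- key structural lemma: products of v0' matrices -/
lemma prod_v0 (l : List (ℕ × ZMod 2)) :
    (l.map (v0' F)).prod = Matrix.of fun r c =>
      if z c = z r + degl l then dmon F (Wl l (z r)) else 0 := by
  induction l with
  | nil =>
    ext r c
    fin_cases r <;> fin_cases c <;>
      simp [degl, Wl, dmon, Matrix.one_apply, (by decide : z 0 = (0:ZMod 2)), (by decide : z 1 = (1:ZMod 2))]
  | cons p t ih =>
    have h2 : ∀ x : ZMod 2, x = 0 ∨ x = 1 := by decide
    have h11 : (1 : ZMod 2) + 1 = 0 := by decide
    have h01 : (0 : ZMod 2) ≠ 1 := by decide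
    have h10 : (1 : ZMod 2) ≠ 0 := by decide
    ext r c
    rw [List.map_cons, List.prod_cons, ih, Matrix.mul_apply, Fin.sum_univ_two]
    rcases h2 p.2 with hp | hp <;>
      rcases h2 (degl t) with hd | hd <;>
      fin_cases r <;> fin_cases c <;>
      simp [v0', Wl, degl, dmon, hp, hd, (by decide : z 0 = (0:ZMod 2)), (by decide : z 1 = (1:ZMod 2)), h11, h01, h10]

/-- the generic monomial-to-single lemma -/
lemma equiv_prod_ι {X : Type} (l : List X) :
    FreeAlgebra.equivMonoidAlgebraFreeMonoid ((l.map (FreeAlgebra.ι F)).prod)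
      = MonoidAlgebra.single (FreeMonoid.ofList l) (1 : F) := by
  induction l with
  | nil => simpa using (MonoidAlgebra.one_def (R := F) (M := FreeMonoid X))
  | cons x t ih =>
    rw [List.map_cons, List.prod_cons, map_mul, ih]
    have : FreeAlgebra.equivMonoidAlgebraFreeMonoid (FreeAlgebra.ι F x)
        = MonoidAlgebra.single (FreeMonoid.of x) (1 : F) := by
      simp [FreeAlgebra.equivMonoidAlgebraFreeMonoid]
    rw [this, MonoidAlgebra.single_mul_single, one_mul]
    rfl

end AuxSect

noncomputable section AuxSect2
variable (F : Type) [Field F]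

lemma z2 : ∀ x : ZMod 2, x = 0 ∨ x = 1 := by decide

def Lrow : MatD F →ₗ[F] D F where
  toFun := fun M => M 0 0 + M 0 1
  map_add' := by intro a b; simp [Matrix.add_apply]; abel
  map_smul' := by intro c a; simp [Matrix.smul_apply, smul_add]

lemma L_prod (l : List (ℕ × ZMod 2)) :
    Lrow F ((l.map (v0' F)).prod) = dmon F (Wl l 0) := by
  rw [prod_v0]
  rcases z2 (degl l) with hd | hd <;>
    simp [Lrow, hd, (by decide : z 0 = (0:ZMod 2)), (by decide : z 1 = (1:ZMod 2)),
      (by decide : (0:ZMod 2) ≠ 1), (by decide : (1:ZMod 2) ≠ 0)]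

lemma v0_mem (p : ℕ × ZMod 2) : v0' F p ∈ matGrading F p.2 := by
  rcases z2 p.2 with hp | hp
  · have h : matGrading F p.2 = diagPart F := by rw [hp]; simp [matGrading]
    rw [h]
    refine ⟨?_, ?_⟩ <;> simp [v0', hp, (by decide : z 0 = (0:ZMod 2)), (by decide : z 1 = (1:ZMod 2))]
  · have h : matGrading F p.2 = offDiagPart F := by rw [hp]; simp [matGrading]
    rw [h]
    refine ⟨?_, ?_⟩ <;> simp [v0', hp, (by decide : z 0 = (0:ZMod 2)), (by decide : z 1 = (1:ZMod 2))]

lemma hinj : Function.Injective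
    (fun w : FreeMonoid (ℕ × ZMod 2) => FreeMonoid.ofList (Wl (FreeMonoid.toList w) 0)) := by
  intro w₁ w₂ h
  have h2 := FreeMonoid.ofList.injective h
  have h3 := Wl_inj _ _ _ h2
  exact FreeMonoid.toList.injective h3

lemma no_identity (f : FreeAlgebra F (ℕ × ZMod 2))
    (hf : FreeAlgebra.lift F (v0' F) f = 0) : f = 0 := by
  classical
  set e := FreeAlgebra.equivMonoidAlgebraFreeMonoid (R := F) (X := ℕ × ZMod 2) with he
  set φ := FreeAlgebra.lift F (v0' F) with hφ
  set g := (e f).coeff with hg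
  -- decompose f into monomials
  have hfd : f = g.sum fun w c => c • ((FreeMonoid.toList w).map (FreeAlgebra.ι F)).prod := by
    conv_lhs => rw [← e.symm_apply_apply f, ← MonoidAlgebra.sum_coeff_single (e f), ← hg]
    rw [map_finsuppSum]
    refine Finsupp.sum_congr fun w _ => ?_
    rw [show (MonoidAlgebra.single w (g w) : MonoidAlgebra F (FreeMonoid (ℕ × ZMod 2)))
        = g w • MonoidAlgebra.single w 1 from by rw [MonoidAlgebra.smul_single', mul_one], map_smul]
    congr 1
    rw [AlgEquiv.symm_apply_eq, equiv_prod_ι, FreeMonoid.ofList_toList]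
  -- apply φ
  have hcomp : ∀ w : FreeMonoid (ℕ × ZMod 2),
      φ (((FreeMonoid.toList w).map (FreeAlgebra.ι F)).prod)
        = ((FreeMonoid.toList w).map (v0' F)).prod := by
    intro w
    have hc : ⇑φ ∘ FreeAlgebra.ι F = v0' F := funext fun x => by simp [hφ]
    rw [map_list_prod, List.map_map, hc]
  have h0 : (g.sum fun w c => c • ((FreeMonoid.toList w).map (v0' F)).prod) = 0 := by
    rw [← hf, hfd, map_finsuppSum]
    exact Finsupp.sum_congr fun w _ => by rw [map_smul, hcomp]
  -- apply Lrow then the D-side equiv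
  have h1 : (g.sum fun w c => c • dmon F (Wl (FreeMonoid.toList w) 0)) = 0 := by
    have := congrArg (Lrow F) h0
    rw [map_finsuppSum, map_zero] at this
    rw [← this]
    exact Finsupp.sum_congr fun w _ => by rw [map_smul, L_prod]
  have h2 : (g.sum fun w c =>
      c • MonoidAlgebra.single (FreeMonoid.ofList (Wl (FreeMonoid.toList w) 0)) (1:F)) = 0 := by
    have := congrArg (FreeAlgebra.equivMonoidAlgebraFreeMonoid (R := F) (X := ℕ)) h1
    rw [map_finsuppSum, map_zero] at this
    rw [← this]
    exact Finsupp.sum_congr fun w _ => by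
      rw [map_smul]
      congr 1
      rw [show dmon F (Wl (FreeMonoid.toList w) 0)
          = ((Wl (FreeMonoid.toList w) 0).map (FreeAlgebra.ι F)).prod from rfl, equiv_prod_ι]
  -- evaluate at each coordinate
  have hgz : g = 0 := by
    ext w₀
    have h3 := congrArg (fun h : MonoidAlgebra F (FreeMonoid ℕ) =>
      h.coeff (FreeMonoid.ofList (Wl (FreeMonoid.toList w₀) 0))) h2
    simp only [MonoidAlgebra.coeff_zero, Finsupp.coe_zero, Pi.zero_apply] at h3
    rw [MonoidAlgebra.coeff_finsuppSum, Finsupp.sum_apply] at h3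
    have h4 : (g.sum fun w c =>
        (c • MonoidAlgebra.single (FreeMonoid.ofList (Wl (FreeMonoid.toList w) 0)) (1:F)).coeff
          (FreeMonoid.ofList (Wl (FreeMonoid.toList w₀) 0)))
        = g.sum fun w c => if w = w₀ then c else 0 := by
      refine Finsupp.sum_congr fun w _ => ?_
      by_cases hww : w = w₀
      · subst hww; simp [MonoidAlgebra.single_apply]
      · rw [if_neg hww]
        have hA : FreeMonoid.ofList (Wl (FreeMonoid.toList w) 0)
            ≠ FreeMonoid.ofList (Wl (FreeMonoid.toList w₀) 0) := fun hA => hww (hinj hA)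
        simp [MonoidAlgebra.single_apply, hA]
    rw [h4, Finsupp.sum_ite_eq'] at h3
    simp only [Finsupp.coe_zero, Pi.zero_apply]
    by_cases hw : w₀ ∈ g.support
    · rw [if_pos hw] at h3; exact h3
    · exact Finsupp.notMem_support_iff.mp hw
  have he0 : e f = 0 := MonoidAlgebra.coeff_injective (by rw [MonoidAlgebra.coeff_zero, ← hg, hgz])
  have : f = e.symm 0 := by rw [← he0, AlgEquiv.symm_apply_apply]
  simpa using this

end AuxSect2

/-- for `A = M₂(F⟨X⟩)` with the `ℤ₂`-grading (`A₀` = diagonal,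
`A₁` = off-diagonal), with `B` the subalgebra of matrices with zero second row and `C` the
subalgebra of matrices with zero first row: `A = B ⊕ C` is a direct sum of homogeneous
subalgebras, both `B` and `C` satisfy the graded identity `x₁^{(1)}x₂^{(1)} = 0`, yet `A`
satisfies no nonzero `ℤ₂`-graded polynomial identity. -/
theorem stmt10 (F : Type) [Field F] :
    -- B and C are subalgebras
    (∀ x ∈ zeroSecondRow F, ∀ y ∈ zeroSecondRow F, x * y ∈ zeroSecondRow F) ∧
    (∀ x ∈ zeroFirstRow F, ∀ y ∈ zeroFirstRow F, x * y ∈ zeroFirstRow F) ∧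
    -- homogeneous in the grading
    (zeroSecondRow F = ⨆ g : ZMod 2, zeroSecondRow F ⊓ matGrading F g) ∧
    (zeroFirstRow F = ⨆ g : ZMod 2, zeroFirstRow F ⊓ matGrading F g) ∧
    -- A = B ⊕ C
    (zeroSecondRow F ⊔ zeroFirstRow F = ⊤) ∧
    (zeroSecondRow F ⊓ zeroFirstRow F = ⊥) ∧
    -- the graded identity x₁⁽¹⁾x₂⁽¹⁾ = 0 on B and on C
    (∀ x ∈ zeroSecondRow F ⊓ matGrading F 1, ∀ y ∈ zeroSecondRow F ⊓ matGrading F 1,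
      x * y = 0) ∧
    (∀ x ∈ zeroFirstRow F ⊓ matGrading F 1, ∀ y ∈ zeroFirstRow F ⊓ matGrading F 1,
      x * y = 0) ∧
    -- A satisfies no nonzero ℤ₂-graded identity
    (∀ f : FreeAlgebra F (ℕ × ZMod 2),
      (∀ v : ℕ × ZMod 2 → MatD F,
        (∀ p : ℕ × ZMod 2, v p ∈ matGrading F p.2) → FreeAlgebra.lift F v f = 0) →
      f = 0) := by
  have hmg1 : matGrading F 1 = offDiagPart F := by simp [matGrading]
  have hmg0 : matGrading F 0 = diagPart F := by simp [matGrading]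
  refine ⟨?_, ?_, ?_, ?_, ?_, ?_, ?_, ?_, ?_⟩
  · intro x hx y hy
    obtain ⟨hx1, hx2⟩ := hx
    exact ⟨by rw [Matrix.mul_apply, Fin.sum_univ_two, hx1, hx2]; simp,
      by rw [Matrix.mul_apply, Fin.sum_univ_two, hx1, hx2]; simp⟩
  · intro x hx y hy
    obtain ⟨hx1, hx2⟩ := hx
    exact ⟨by rw [Matrix.mul_apply, Fin.sum_univ_two, hx1, hx2]; simp,
      by rw [Matrix.mul_apply, Fin.sum_univ_two, hx1, hx2]; simp⟩
  · refine le_antisymm ?_ (iSup_le fun g => inf_le_left)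
    intro M hM
    obtain ⟨hM1, hM2⟩ := hM
    have hdec : M = Matrix.of ![![M 0 0, 0], ![0, 0]] + Matrix.of ![![0, M 0 1], ![0, 0]] := by
      ext r c; fin_cases r <;> fin_cases c <;> simp [hM1, hM2]
    rw [hdec]
    refine Submodule.add_mem _ (le_iSup (fun g => zeroSecondRow F ⊓ matGrading F g) 0 ?_)
      (le_iSup (fun g => zeroSecondRow F ⊓ matGrading F g) 1 ?_)
    · exact Submodule.mem_inf.mpr ⟨⟨by simp, by simp⟩, by rw [hmg0]; exact ⟨by simp, by simp⟩⟩
    · exact Submodule.mem_inf.mpr ⟨⟨by simp, by simp⟩, by rw [hmg1]; exact ⟨by simp, by simp⟩⟩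
  · refine le_antisymm ?_ (iSup_le fun g => inf_le_left)
    intro M hM
    obtain ⟨hM1, hM2⟩ := hM
    have hdec : M = Matrix.of ![![0, 0], ![0, M 1 1]] + Matrix.of ![![0, 0], ![M 1 0, 0]] := by
      ext r c; fin_cases r <;> fin_cases c <;> simp [hM1, hM2]
    rw [hdec]
    refine Submodule.add_mem _ (le_iSup (fun g => zeroFirstRow F ⊓ matGrading F g) 0 ?_)
      (le_iSup (fun g => zeroFirstRow F ⊓ matGrading F g) 1 ?_)
    · exact Submodule.mem_inf.mpr ⟨⟨by simp, by simp⟩, by rw [hmg0]; exact ⟨by simp, by simp⟩⟩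
    · exact Submodule.mem_inf.mpr ⟨⟨by simp, by simp⟩, by rw [hmg1]; exact ⟨by simp, by simp⟩⟩
  · rw [eq_top_iff]
    intro M _
    have hdec : M = Matrix.of ![![M 0 0, M 0 1], ![0, 0]]
        + Matrix.of ![![0, 0], ![M 1 0, M 1 1]] := by
      ext r c; fin_cases r <;> fin_cases c <;> simp
    rw [hdec]
    exact Submodule.add_mem _
      (Submodule.mem_sup_left ⟨by simp, by simp⟩)
      (Submodule.mem_sup_right ⟨by simp, by simp⟩)
  · rw [eq_bot_iff]
    intro M hM
    rw [Submodule.mem_inf] at hM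
    obtain ⟨⟨h1, h2⟩, h3, h4⟩ := hM
    have : M = 0 := by ext r c; fin_cases r <;> fin_cases c <;> simp [h1, h2, h3, h4]
    rw [Submodule.mem_bot]
    exact this
  · intro x hx y hy
    rw [Submodule.mem_inf, hmg1] at hx hy
    obtain ⟨⟨hx1, hx2⟩, hx3, hx4⟩ := hx
    obtain ⟨⟨hy1, hy2⟩, hy3, hy4⟩ := hy
    ext r c
    fin_cases r <;> fin_cases c <;>
      simp [Matrix.mul_apply, Fin.sum_univ_two, hx1, hx2, hx3, hx4, hy1, hy2, hy3, hy4]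
  · intro x hx y hy
    rw [Submodule.mem_inf, hmg1] at hx hy
    obtain ⟨⟨hx1, hx2⟩, hx3, hx4⟩ := hx
    obtain ⟨⟨hy1, hy2⟩, hy3, hy4⟩ := hy
    ext r c
    fin_cases r <;> fin_cases c <;>
      simp [Matrix.mul_apply, Fin.sum_univ_two, hx1, hx2, hx3, hx4, hy1, hy2, hy3, hy4]
  · intro f hf
    exact no_identity F f (hf (v0' F) (fun p => v0_mem F p))
end

section
/- For positive integers n and d, the number of d-good permutations in the symmetric group S_n is at most (d−1)^{2n}. -/
/-- `σ ∈ Sₙ` is `d`-bad if it admits a decreasing subsequence of length `d`: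
indices `i₁ < ⋯ < i_d` with `σ(i₁) > ⋯ > σ(i_d)`; otherwise `σ` is `d`-good. -/
def IsBadPerm {n : ℕ} (d : ℕ) (σ : Equiv.Perm (Fin n)) : Prop :=
  ∃ s : Fin d → Fin n, StrictMono s ∧ ∀ i j : Fin d, i < j → σ (s j) < σ (s i)


def dlen {n : ℕ} (σ : Equiv.Perm (Fin n)) (i : Fin n) : ℕ :=
  ((Finset.univ.filter fun j => j < i ∧ σ i < σ j).attach.sup
    fun j => dlen σ j.1) + 1
termination_by i.val
decreasing_by
  have := j.2
  simp only [Finset.mem_filter] at this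
  exact this.2.1

lemma dlen_pos {n : ℕ} (σ : Equiv.Perm (Fin n)) (i : Fin n) : 1 ≤ dlen σ i := by
  rw [dlen]; omega

lemma dlen_lt {n : ℕ} (σ : Equiv.Perm (Fin n)) {i j : Fin n} (h : i < j)
    (hσ : σ j < σ i) : dlen σ i < dlen σ j := by
  conv_rhs => rw [dlen]
  have hi : i ∈ Finset.univ.filter fun k => k < j ∧ σ j < σ k := by
    simp [h, hσ]
  have := Finset.le_sup (f := fun k : {x // x ∈ Finset.univ.filter fun k => k < j ∧ σ j < σ k} => dlen σ k.1)
    (Finset.mem_attach _ ⟨i, hi⟩)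
  dsimp only at this
  omega

lemma dlen_chain {n : ℕ} (σ : Equiv.Perm (Fin n)) :
    ∀ N (i : Fin n) m, dlen σ i = m + 1 → m + 1 ≤ N →
    ∃ s : Fin (m + 1) → Fin n, StrictMono s ∧ (∀ k l, k < l → σ (s l) < σ (s k)) ∧
      s (Fin.last m) = i := by
  intro N
  induction N with
  | zero => intro i m h1 h2; omega
  | succ N ih =>
    intro i m h1 h2
    by_cases hF : (Finset.univ.filter fun j => j < i ∧ σ i < σ j).Nonempty
    · obtain ⟨j₀, -, hj0⟩ := Finset.exists_mem_eq_sup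
        (Finset.univ.filter fun j => j < i ∧ σ i < σ j).attach
        (Finset.attach_nonempty_iff.2 hF) (fun j => dlen σ j.1)
      have hjmem := j₀.2
      simp only [Finset.mem_filter, Finset.mem_univ, true_and] at hjmem
      obtain ⟨hji, hσji⟩ := hjmem
      have heq : dlen σ i = dlen σ j₀.1 + 1 := by rw [dlen, ← hj0]
      have hm1 : 1 ≤ dlen σ j₀.1 := dlen_pos σ j₀.1
      obtain ⟨m', hm'⟩ : ∃ m', m = m' + 1 := ⟨m - 1, by omega⟩
      subst hm'
      have hdj : dlen σ j₀.1 = m' + 1 := by omega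
      obtain ⟨s, hs, hdec, hlast⟩ := ih j₀.1 m' hdj (by omega)
      refine ⟨fun k => if h' : k.val < m' + 1 then s ⟨k.val, h'⟩ else i, ?_, ?_, ?_⟩
      · intro k l hkl
        have hklv : k.val < l.val := hkl
        rcases lt_or_ge l.val (m' + 1) with hl | hl
        · have hk : k.val < m' + 1 := by omega
          simp only [dif_pos hl, dif_pos hk]
          exact hs (show (⟨k.val, hk⟩ : Fin (m' + 1)) < ⟨l.val, hl⟩ from hklv)
        · have hlm : ¬ (l.val < m' + 1) := by omega
          have hk : k.val < m' + 1 := by have := l.2; omega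
          simp only [dif_pos hk, dif_neg hlm]
          calc s ⟨k.val, hk⟩ ≤ s (Fin.last m') := hs.monotone (by
                simp only [Fin.le_def, Fin.val_last]; omega)
            _ = j₀.1 := hlast
            _ < i := hji
      · intro k l hkl
        have hklv : k.val < l.val := hkl
        rcases lt_or_ge l.val (m' + 1) with hl | hl
        · have hk : k.val < m' + 1 := by omega
          simp only [dif_pos hl, dif_pos hk]
          exact hdec _ _ (show (⟨k.val, hk⟩ : Fin (m' + 1)) < ⟨l.val, hl⟩ from hklv)
        · have hlm : ¬ (l.val < m' + 1) := by omega
          have hk : k.val < m' + 1 := by have := l.2; omega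
          simp only [dif_pos hk, dif_neg hlm]
          have h2 : σ (s (Fin.last m')) ≤ σ (s ⟨k.val, hk⟩) := by
            rcases eq_or_lt_of_le (show k.val ≤ m' by omega) with he | hlt
            · have : (⟨k.val, hk⟩ : Fin (m' + 1)) = Fin.last m' := by
                simp [Fin.ext_iff, he]
              rw [this]
            · exact le_of_lt (hdec _ _ (show (⟨k.val, hk⟩ : Fin (m' + 1)) < Fin.last m' from hlt))
          calc σ i < σ j₀.1 := hσji
            _ = σ (s (Fin.last m')) := by rw [hlast]
            _ ≤ _ := h2
      · have : ¬ ((Fin.last (m' + 1)).val < m' + 1) := by simp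
        simp only [dif_neg this]
    · have h0 : dlen σ i = 1 := by
        rw [dlen, Finset.not_nonempty_iff_eq_empty.1 hF]
        simp
      have hm0 : m = 0 := by omega
      subst hm0
      refine ⟨fun _ => i, ?_, ?_, rfl⟩
      · intro k l hkl
        have := k.2; have := l.2; have h := Fin.lt_def.1 hkl
        omega
      · intro k l hkl
        have := k.2; have := l.2; have h := Fin.lt_def.1 hkl
        omega

lemma dlen_le {n d : ℕ} {σ : Equiv.Perm (Fin n)} (hgood : ¬ IsBadPerm d σ) (i : Fin n) :
    dlen σ i ≤ d - 1 := by
  by_contra hlt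
  push_neg at hlt
  obtain ⟨m, hm⟩ : ∃ m, dlen σ i = m + 1 := ⟨dlen σ i - 1, by have := dlen_pos σ i; omega⟩
  obtain ⟨s, hs, hdec, -⟩ := dlen_chain σ (m + 1) i m hm le_rfl
  have hdm : d ≤ m + 1 := by omega
  exact hgood ⟨fun k => s (Fin.castLE hdm k), hs.comp (Fin.strictMono_castLE hdm),
    fun k l hkl => hdec _ _ (Fin.strictMono_castLE hdm hkl)⟩

lemma dlen_strictMonoOn {n : ℕ} (σ : Equiv.Perm (Fin n)) {i j : Fin n} (hij : i < j)
    (h : dlen σ i = dlen σ j) : σ i < σ j := by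
  rcases lt_trichotomy (σ i) (σ j) with h' | h' | h'
  · exact h'
  · exact absurd (σ.injective h') (ne_of_lt hij)
  · exact absurd (dlen_lt σ hij h') (by omega)

lemma dlen_determines {n : ℕ} {σ τ : Equiv.Perm (Fin n)}
    (h1 : ∀ i, dlen σ i = dlen τ i) (h2 : ∀ v, dlen σ (σ⁻¹ v) = dlen τ (τ⁻¹ v)) :
    σ = τ := by
  ext i
  set k := dlen σ i with hk
  set P := Finset.univ.filter (fun x => dlen σ x = k) with hP
  set V := Finset.univ.filter (fun v => dlen σ (σ⁻¹ v) = k) with hV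
  have hVP : V = P.image σ := by
    ext v
    simp only [hV, hP, Finset.mem_filter, Finset.mem_univ, true_and, Finset.mem_image]
    constructor
    · intro h; exact ⟨σ⁻¹ v, by simpa using h, by simp⟩
    · rintro ⟨x, hx, rfl⟩; simpa using hx
  have hcard : V.card = P.card := by
    rw [hVP, Finset.card_image_of_injective _ σ.injective]
  have hmemP : ∀ a : Fin P.card, P.orderEmbOfFin rfl a ∈ P :=
    fun a => P.orderEmbOfFin_mem rfl a
  have hdlenP : ∀ a : Fin P.card, dlen σ (P.orderEmbOfFin rfl a) = k := by
    intro a; have := hmemP a; simp only [hP, Finset.mem_filter] at this; exact this.2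
  have hσmem : ∀ a : Fin P.card, σ (P.orderEmbOfFin rfl a) ∈ V := by
    intro a
    simp only [hV, Finset.mem_filter, Finset.mem_univ, true_and, Equiv.Perm.coe_inv, Equiv.symm_apply_apply]
    exact hdlenP a
  have hτmem : ∀ a : Fin P.card, τ (P.orderEmbOfFin rfl a) ∈ V := by
    intro a
    simp only [hV, Finset.mem_filter, Finset.mem_univ, true_and]
    rw [h2, Equiv.Perm.inv_eq_iff_eq.2 rfl, ← h1]
    exact hdlenP a
  have hσmono : StrictMono (fun a : Fin P.card => σ (P.orderEmbOfFin rfl a)) := by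
    intro a b hab
    exact dlen_strictMonoOn σ ((P.orderEmbOfFin rfl).strictMono hab)
      (by rw [hdlenP a, hdlenP b])
  have hτmono : StrictMono (fun a : Fin P.card => τ (P.orderEmbOfFin rfl a)) := by
    intro a b hab
    exact dlen_strictMonoOn τ ((P.orderEmbOfFin rfl).strictMono hab)
      (by rw [← h1, ← h1, hdlenP a, hdlenP b])
  have hσeq := Finset.orderEmbOfFin_unique hcard hσmem hσmono
  have hτeq := Finset.orderEmbOfFin_unique hcard hτmem hτmono
  have hiP : i ∈ P := by simp [hP, hk]
  have : i ∈ Set.range (P.orderEmbOfFin rfl) := by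
    rw [Finset.range_orderEmbOfFin]; exact_mod_cast hiP
  obtain ⟨a, ha⟩ := this
  refine congrArg Fin.val ?_
  calc σ i = σ (P.orderEmbOfFin rfl a) := by rw [ha]
    _ = V.orderEmbOfFin hcard a := congrFun hσeq a
    _ = τ (P.orderEmbOfFin rfl a) := (congrFun hτeq a).symm
    _ = τ i := by rw [ha]

/-- for positive integers `n` and `d`, the number of `d`-good permutations in
the symmetric group `Sₙ` is at most `(d−1)^{2n}`. -/
theorem stmt13 (n d : ℕ) (hn : 0 < n) (hd : 0 < d) :
    Nat.card {σ : Equiv.Perm (Fin n) // ¬ IsBadPerm d σ} ≤ (d - 1) ^ (2 * n) := by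
  have hF : ∀ (σ : {σ : Equiv.Perm (Fin n) // ¬ IsBadPerm d σ}) (i : Fin n),
      dlen σ.1 i - 1 < d - 1 := by
    intro σ i
    have h1 := dlen_le σ.2 i
    have h2 := dlen_pos σ.1 i
    omega
  set F : {σ : Equiv.Perm (Fin n) // ¬ IsBadPerm d σ} →
      (Fin n → Fin (d - 1)) × (Fin n → Fin (d - 1)) :=
    fun σ => (fun i => ⟨dlen σ.1 i - 1, hF σ i⟩,
              fun v => ⟨dlen σ.1 (σ.1⁻¹ v) - 1, hF σ (σ.1⁻¹ v)⟩) with hFdef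
  have hinj : Function.Injective F := by
    intro σ τ h
    rw [hFdef] at h
    simp only [Prod.mk.injEq, funext_iff, Fin.mk.injEq] at h
    obtain ⟨ha, hb⟩ := h
    apply Subtype.ext
    apply dlen_determines
    · intro i
      have := ha i
      have p1 := dlen_pos σ.1 i; have p2 := dlen_pos τ.1 i
      omega
    · intro v
      have := hb v
      have p1 := dlen_pos σ.1 (σ.1⁻¹ v); have p2 := dlen_pos τ.1 (τ.1⁻¹ v)
      omega
  calc Nat.card {σ : Equiv.Perm (Fin n) // ¬ IsBadPerm d σ}
      ≤ Nat.card ((Fin n → Fin (d - 1)) × (Fin n → Fin (d - 1))) :=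
        Nat.card_le_card_of_injective F hinj
    _ = (d - 1) ^ (2 * n) := by
        simp [Nat.card_eq_fintype_card, two_mul, pow_add]
end
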